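/- Theorem 3 (Schoenberg–Gneiting criterion for strict positive definiteness on spheres). Let f:[−1,1]→ℝ be given by f(ρ)=Σ_{n=0}^∞ b_n ρ^n with b_n ≥ 0 for all n and Σ_{n=0}^∞ b_n < ∞. Then the kernel K_f^{(n₀)}(x,x') = f(xᵀx') on the unit sphere S^{n₀−1}={x∈ℝ^{n₀} : xᵀx=1} is positive definite for every n₀ ≥ 1 if and only if b_n > 0 for infinitely many even integers n and for infinitely many odd integers n. -/

import Mathlib

noncomputable section

open Finset Filter Topology

lemma sgaux_sum_pow {n0 : ℕ} (x y : Fin n0 → ℝ) (n : ℕ) :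
    (∑ l, x l * y l) ^ n
      = ∑ k : Fin n → Fin n0, (∏ m, x (k m)) * (∏ m, y (k m)) := by
  rw [Finset.sum_pow' Finset.univ (fun l => x l * y l) n]
  rw [← Fintype.piFinset_univ]
  exact Finset.sum_congr rfl fun k _ => by rw [Finset.prod_mul_distrib]

lemma sgaux_quad_eq {n0 d : ℕ} (z : Fin d → Fin n0 → ℝ) (c : Fin d → ℝ) (n : ℕ) :
    ∑ i, ∑ j, c i * c j * (∑ l, z i l * z j l) ^ n
      = ∑ k : Fin n → Fin n0, (∑ i, c i * ∏ m, z i (k m)) ^ 2 := by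
  set P : Fin d → (Fin n → Fin n0) → ℝ := fun i k => ∏ m, z i (k m) with hP
  calc ∑ i, ∑ j, c i * c j * (∑ l, z i l * z j l) ^ n
      = ∑ i, ∑ j, ∑ k : Fin n → Fin n0, c i * c j * (P i k * P j k) := by
        simp_rw [sgaux_sum_pow, Finset.mul_sum, hP]
    _ = ∑ i, ∑ k : Fin n → Fin n0, ∑ j, c i * c j * (P i k * P j k) :=
        Finset.sum_congr rfl fun i _ => Finset.sum_comm
    _ = ∑ k : Fin n → Fin n0, ∑ i, ∑ j, c i * c j * (P i k * P j k) := Finset.sum_comm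
    _ = ∑ k : Fin n → Fin n0, (∑ i, c i * P i k) ^ 2 := by
        refine Finset.sum_congr rfl fun k _ => ?_
        rw [sq, Finset.sum_mul_sum]
        exact Finset.sum_congr rfl fun i _ => Finset.sum_congr rfl fun j _ => by ring

lemma sgaux_quad_nonneg {n0 d : ℕ} (z : Fin d → Fin n0 → ℝ) (c : Fin d → ℝ) (n : ℕ) :
    0 ≤ ∑ i, ∑ j, c i * c j * (∑ l, z i l * z j l) ^ n := by
  rw [sgaux_quad_eq]
  exact Finset.sum_nonneg fun k _ => sq_nonneg _


lemma sgaux_abs_le {n0 : ℕ} (x y : Fin n0 → ℝ) (hx : ∑ l, x l * x l = 1)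
    (hy : ∑ l, y l * y l = 1) : |∑ l, x l * y l| ≤ 1 := by
  rw [abs_le_one_iff_mul_self_le_one]
  have := Finset.sum_mul_sq_le_sq_mul_sq Finset.univ x y
  simp_rw [← sq] at hx hy
  rw [hx, hy, mul_one] at this
  nlinarith [this]

lemma sgaux_eq_one {n0 : ℕ} (x y : Fin n0 → ℝ) (hx : ∑ l, x l * x l = 1)
    (hy : ∑ l, y l * y l = 1) (h : ∑ l, x l * y l = 1) : x = y := by
  have hsum : ∑ l, (x l - y l) ^ 2 = 0 := by
    have : ∑ l, (x l - y l) ^ 2 = (∑ l, x l * x l) - 2 * (∑ l, x l * y l)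
        + ∑ l, y l * y l := by
      rw [Finset.mul_sum, ← Finset.sum_sub_distrib, ← Finset.sum_add_distrib]
      exact Finset.sum_congr rfl fun l _ => by ring
    rw [this, hx, hy, h]; ring
  funext l
  have := (Finset.sum_eq_zero_iff_of_nonneg (fun l _ => sq_nonneg (x l - y l))).1 hsum l
    (Finset.mem_univ l)
  have := sq_eq_zero_iff.1 this
  linarith

lemma sgaux_tendsto_even (t : ℝ) (ht : |t| ≤ 1) :
    Filter.Tendsto (fun n : ℕ => t ^ (2 * n)) Filter.atTop
      (𝓝 (if t = 1 ∨ t = -1 then 1 else 0)) := by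
  simp_rw [pow_mul]
  by_cases h : t = 1 ∨ t = -1
  · have h2 : t ^ 2 = 1 := by rcases h with h | h <;> rw [h] <;> ring
    simp only [h, if_pos, h2, one_pow]
    exact tendsto_const_nhds
  · have h2 : |t ^ 2| < 1 := by
      push_neg at h
      have hlt : |t| < 1 := lt_of_le_of_ne ht (by
        intro habs
        rcases abs_eq (by norm_num : (0:ℝ) ≤ 1) |>.mp habs with h1 | h1
        · exact h.1 h1
        · exact h.2 h1)
      rw [abs_pow]
      nlinarith [abs_nonneg t]
    simp only [h, if_neg, not_false_iff]
    exact tendsto_pow_atTop_nhds_zero_of_abs_lt_one h2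

lemma sgaux_tendsto_odd (t : ℝ) (ht : |t| ≤ 1) :
    Filter.Tendsto (fun n : ℕ => t ^ (2 * n + 1)) Filter.atTop
      (𝓝 (if t = 1 then 1 else if t = -1 then -1 else 0)) := by
  have h := (sgaux_tendsto_even t ht).mul_const t
  have heq : (fun n : ℕ => t ^ (2 * n) * t) = fun n : ℕ => t ^ (2 * n + 1) := by
    funext n; rw [pow_succ]
  rw [heq] at h
  convert h using 2
  by_cases h1 : t = 1
  · simp [h1]
  · by_cases h2 : t = -1
    · norm_num [h1, h2]
    · simp [h1, h2]

lemma sgaux_summable_bt (b : ℕ → ℝ) (hb : ∀ n, 0 ≤ b n) (hsum : Summable b)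
    (t : ℝ) (ht : |t| ≤ 1) : Summable (fun n : ℕ => b n * t ^ n) := by
  apply Summable.of_abs
  apply Summable.of_nonneg_of_le (fun n => abs_nonneg _) (fun n => ?_) hsum
  rw [abs_mul, abs_of_nonneg (hb n), abs_pow]
  calc b n * |t| ^ n ≤ b n * 1 := by
        have : |t| ^ n ≤ 1 := pow_le_one₀ (abs_nonneg t) ht
        nlinarith [hb n]
    _ = b n := mul_one _

lemma sgaux_bwd (b : ℕ → ℝ) (hb : ∀ n, 0 ≤ b n) (hsum : Summable b)
    (he : {n : ℕ | Even n ∧ 0 < b n}.Infinite) (ho : {n : ℕ | Odd n ∧ 0 < b n}.Infinite)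
    {n0 d : ℕ} (z : Fin d → Fin n0 → ℝ) (hz : ∀ i, ∑ l, z i l * z i l = 1)
    (hinj : Function.Injective z) (c : Fin d → ℝ) (hc : c ≠ 0) :
    0 < ∑ i, ∑ j, c i * c j * ∑' n : ℕ, b n * (∑ l, z i l * z j l) ^ n := by
  classical
  set t : Fin d → Fin d → ℝ := fun i j => ∑ l, z i l * z j l with ht_def
  set A : ℕ → ℝ := fun n => ∑ i, ∑ j, c i * c j * t i j ^ n with hA_def
  have habs : ∀ i j, |t i j| ≤ 1 := fun i j => sgaux_abs_le (z i) (z j) (hz i) (hz j)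
  have hA0 : ∀ n, 0 ≤ A n := fun n => sgaux_quad_nonneg z c n
  have htone : ∀ i j, t i j = 1 → i = j :=
    fun i j h => hinj (sgaux_eq_one (z i) (z j) (hz i) (hz j) h)
  have hdiag : ∀ i, t i i = 1 := hz
  -- limit values
  set ge : ℝ → ℝ := fun s => if s = 1 ∨ s = -1 then 1 else 0 with hge_def
  set go : ℝ → ℝ := fun s => if s = 1 then 1 else if s = -1 then -1 else 0 with hgo_def
  set Le : ℝ := ∑ i, ∑ j, c i * c j * ge (t i j) with hLe_def
  set Lo : ℝ := ∑ i, ∑ j, c i * c j * go (t i j) with hLo_def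
  have hLeT : Filter.Tendsto (fun n : ℕ => A (2 * n)) Filter.atTop (𝓝 Le) := by
    apply tendsto_finset_sum
    intro i _
    apply tendsto_finset_sum
    intro j _
    exact (sgaux_tendsto_even (t i j) (habs i j)).const_mul _
  have hLoT : Filter.Tendsto (fun n : ℕ => A (2 * n + 1)) Filter.atTop (𝓝 Lo) := by
    apply tendsto_finset_sum
    intro i _
    apply tendsto_finset_sum
    intro j _
    exact (sgaux_tendsto_odd (t i j) (habs i j)).const_mul _
  have hLe0 : 0 ≤ Le := ge_of_tendsto hLeT (Filter.Eventually.of_forall fun n => hA0 _)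
  have hLo0 : 0 ≤ Lo := ge_of_tendsto hLoT (Filter.Eventually.of_forall fun n => hA0 _)
  have hcs : 0 < ∑ i, c i ^ 2 := by
    obtain ⟨i, hi⟩ := Function.ne_iff.mp hc
    exact Finset.sum_pos' (fun i _ => sq_nonneg _)
      ⟨i, Finset.mem_univ i, lt_of_le_of_ne (sq_nonneg _) (Ne.symm (pow_ne_zero 2 hi))⟩
  have hsumLL : Le + Lo = 2 * ∑ i, c i ^ 2 := by
    rw [hLe_def, hLo_def, ← Finset.sum_add_distrib]
    have : ∀ i, (∑ j, c i * c j * ge (t i j)) + (∑ j, c i * c j * go (t i j))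
        = 2 * c i ^ 2 := by
      intro i
      rw [← Finset.sum_add_distrib]
      have hterm : ∀ j, c i * c j * ge (t i j) + c i * c j * go (t i j)
          = if j = i then 2 * c i ^ 2 else 0 := by
        intro j
        have hgego : ge (t i j) + go (t i j) = if t i j = 1 then 2 else 0 := by
          simp only [hge_def, hgo_def]
          by_cases h1 : t i j = 1
          · rw [if_pos (Or.inl h1), if_pos h1, if_pos h1]; norm_num
          · by_cases h2 : t i j = -1
            · rw [if_pos (Or.inr h2), if_neg h1, if_pos h2, if_neg h1]; norm_num
            · rw [if_neg (by tauto), if_neg h1, if_neg h2, if_neg h1]; norm_num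
        rw [← mul_add, hgego]
        by_cases h : j = i
        · rw [if_pos (by rw [h]; exact hdiag i), if_pos h, h]; ring
        · rw [if_neg (fun hh => h (htone i j hh).symm), if_neg h, mul_zero]
      rw [Finset.sum_congr rfl fun j _ => hterm j, Finset.sum_ite_eq' Finset.univ i
        (fun _ => 2 * c i ^ 2)]
      simp
    rw [Finset.sum_congr rfl fun i _ => this i, ← Finset.mul_sum]
  -- find n1 with b n1 > 0 and A n1 > 0
  obtain ⟨n1, hbn1, hAn1⟩ : ∃ n1, 0 < b n1 ∧ 0 < A n1 := by
    have hor : 0 < Le ∨ 0 < Lo := by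
      by_contra hcon
      push_neg at hcon
      have : Le = 0 := le_antisymm hcon.1 hLe0
      have : Lo = 0 := le_antisymm hcon.2 hLo0
      nlinarith
    rcases hor with hpos | hpos
    · have hev : ∀ᶠ k in Filter.atTop, Le / 2 < A (2 * k) :=
        hLeT.eventually (eventually_gt_nhds (by linarith))
      obtain ⟨K, hK⟩ := Filter.eventually_atTop.mp hev
      obtain ⟨n1, hn1mem, hn1gt⟩ := he.exists_gt (2 * K)
      obtain ⟨⟨r, hr⟩, hb1⟩ := hn1mem
      refine ⟨n1, hb1, ?_⟩
      have hrK : K ≤ r := by omega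
      have := hK r hrK
      have h2r : 2 * r = n1 := by omega
      rw [h2r] at this
      linarith
    · have hev : ∀ᶠ k in Filter.atTop, Lo / 2 < A (2 * k + 1) :=
        hLoT.eventually (eventually_gt_nhds (by linarith))
      obtain ⟨K, hK⟩ := Filter.eventually_atTop.mp hev
      obtain ⟨n1, hn1mem, hn1gt⟩ := ho.exists_gt (2 * K)
      obtain ⟨⟨r, hr⟩, hb1⟩ := hn1mem
      refine ⟨n1, hb1, ?_⟩
      have hrK : K ≤ r := by omega
      have := hK r hrK
      have h2r : 2 * r + 1 = n1 := by omega
      rw [h2r] at this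
      linarith
  -- summability facts
  have hsummbt : ∀ i j, Summable (fun n : ℕ => b n * t i j ^ n) :=
    fun i j => sgaux_summable_bt b hb hsum (t i j) (habs i j)
  have hswap : ∑ i, ∑ j, c i * c j * ∑' n : ℕ, b n * t i j ^ n = ∑' n, b n * A n := by
    have step1 : ∀ i j : Fin d, c i * c j * ∑' n : ℕ, b n * t i j ^ n
        = ∑' n : ℕ, c i * c j * (b n * t i j ^ n) := fun i j => (tsum_mul_left).symm
    simp_rw [step1]
    have step2 : ∀ i : Fin d, ∑ j, ∑' n : ℕ, c i * c j * (b n * t i j ^ n)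
        = ∑' n : ℕ, ∑ j, c i * c j * (b n * t i j ^ n) := by
      intro i
      exact (Summable.tsum_finsetSum fun j _ => (hsummbt i j).mul_left (c i * c j)).symm
    simp_rw [step2]
    rw [← Summable.tsum_finsetSum fun i _ => summable_sum fun j _ => (hsummbt i j).mul_left (c i * c j)]
    apply tsum_congr
    intro n
    rw [hA_def, Finset.mul_sum]
    refine Finset.sum_congr rfl fun i _ => ?_
    rw [Finset.mul_sum]
    exact Finset.sum_congr rfl fun j _ => by ring
  have hsummA : Summable (fun n => b n * A n) := by
    apply Summable.of_abs
    apply Summable.of_nonneg_of_le (fun n => abs_nonneg _) (fun n => ?_)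
      (hsum.mul_right (∑ i, ∑ j, |c i * c j|))
    rw [abs_mul, abs_of_nonneg (hb n)]
    have hAbound : |A n| ≤ ∑ i, ∑ j, |c i * c j| := by
      rw [hA_def]
      calc |∑ i, ∑ j, c i * c j * t i j ^ n| ≤ ∑ i, |∑ j, c i * c j * t i j ^ n| :=
            Finset.abs_sum_le_sum_abs _ _
        _ ≤ ∑ i, ∑ j, |c i * c j * t i j ^ n| :=
            Finset.sum_le_sum fun i _ => Finset.abs_sum_le_sum_abs _ _
        _ ≤ ∑ i, ∑ j, |c i * c j| := by
            refine Finset.sum_le_sum fun i _ => Finset.sum_le_sum fun j _ => ?_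
            rw [abs_mul]
            have h1 : |t i j ^ n| ≤ 1 := by
              rw [abs_pow]; exact pow_le_one₀ (abs_nonneg _) (habs i j)
            nlinarith [abs_nonneg (c i * c j)]
    nlinarith [hb n]
  rw [hswap]
  exact Summable.tsum_pos hsummA (fun n => mul_nonneg (hb n) (hA0 n)) n1 (mul_pos hbn1 hAn1)


lemma sgaux_kernel (N m : ℕ) (hm : ∑ n ∈ Finset.range N, 2 ^ n < m)
    (x : Fin m → Fin 2 → ℝ) :
    ∃ c : Fin m → ℝ, c ≠ 0 ∧
      ∀ n, n < N → ∀ k : Fin n → Fin 2, ∑ i, c i * ∏ s, x i (k s) = 0 := by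
  classical
  let V := (n : Fin N) → (Fin (n : ℕ) → Fin 2) → ℝ
  let Φ : (Fin m → ℝ) →ₗ[ℝ] V :=
    { toFun := fun c n k => ∑ i, c i * ∏ s, x i (k s)
      map_add' := by
        intro u v; funext n k
        show _ = (∑ i, u i * ∏ s, x i (k s)) + ∑ i, v i * ∏ s, x i (k s)
        rw [← Finset.sum_add_distrib]
        exact Finset.sum_congr rfl fun i _ => by simp only [Pi.add_apply]; ring
      map_smul' := by
        intro r u; funext n k
        show (∑ i, (r • u) i * ∏ s, x i (k s)) = r * ∑ i, u i * ∏ s, x i (k s)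
        rw [Finset.mul_sum]
        exact Finset.sum_congr rfl fun i _ => by
          simp only [Pi.smul_apply, smul_eq_mul]; ring }
  have hV : Module.finrank ℝ V < m := by
    have h1 : Module.finrank ℝ V = ∑ n : Fin N, 2 ^ (n : ℕ) := by
      rw [Module.finrank_pi_fintype ℝ]
      refine Finset.sum_congr rfl fun n _ => ?_
      rw [Module.finrank_pi ℝ]
      rw [Fintype.card_fun]
      simp
    rw [h1, Fin.sum_univ_eq_sum_range (fun n => 2 ^ n) N]
    exact hm
  have hni : ¬ Function.Injective Φ := by
    intro hinj
    have := LinearMap.finrank_le_finrank_of_injective hinj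
    rw [Module.finrank_fintype_fun_eq_card, Fintype.card_fin] at this
    omega
  rw [Function.not_injective_iff] at hni
  obtain ⟨u, v, huv, hne⟩ := hni
  refine ⟨u - v, sub_ne_zero.mpr hne, ?_⟩
  intro n hn k
  have hzero : Φ (u - v) = 0 := by rw [map_sub, huv, sub_self]
  have := congrFun (congrFun hzero ⟨n, hn⟩) k
  simp [Φ, sub_mul, Finset.sum_sub_distrib] at this ⊢
  exact this

lemma sgaux_F (b : ℕ → ℝ) (hb : ∀ n, 0 ≤ b n) (hsum : Summable b) (N : ℕ) (ε : ℝ)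
    (hvan : ∀ n, N ≤ n → b n * (1 + ε * (-1) ^ n) = 0) (t : ℝ) (ht : |t| ≤ 1) :
    (∑' n : ℕ, b n * t ^ n) + ε * ∑' n : ℕ, b n * (-t) ^ n
      = ∑ n ∈ Finset.range N, (b n * (1 + ε * (-1) ^ n)) * t ^ n := by
  have h1 : Summable (fun n : ℕ => b n * t ^ n) := sgaux_summable_bt b hb hsum t ht
  have h2 : Summable (fun n : ℕ => b n * (-t) ^ n) :=
    sgaux_summable_bt b hb hsum (-t) (by rwa [abs_neg])
  rw [← tsum_mul_left, ← Summable.tsum_add h1 (h2.mul_left ε)]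
  have hcongr : ∀ n : ℕ, b n * t ^ n + ε * (b n * (-t) ^ n)
      = (b n * (1 + ε * (-1) ^ n)) * t ^ n := by
    intro n
    rw [neg_pow]
    ring
  rw [tsum_congr hcongr]
  exact tsum_eq_sum (fun n hn => by
    rw [hvan n (by simpa using hn), zero_mul])

lemma sgaux_swap_fin {d : ℕ} (c : Fin d → ℝ) (T : Fin d → Fin d → ℝ) (N : ℕ)
    (coef : ℕ → ℝ) :
    ∑ i, ∑ j, c i * c j * ∑ n ∈ Finset.range N, coef n * T i j ^ n
      = ∑ n ∈ Finset.range N, coef n * ∑ i, ∑ j, c i * c j * T i j ^ n := by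
  calc ∑ i, ∑ j, c i * c j * ∑ n ∈ Finset.range N, coef n * T i j ^ n
      = ∑ i, ∑ j, ∑ n ∈ Finset.range N, c i * c j * (coef n * T i j ^ n) := by
        simp_rw [Finset.mul_sum]
    _ = ∑ i, ∑ n ∈ Finset.range N, ∑ j, c i * c j * (coef n * T i j ^ n) :=
        Finset.sum_congr rfl fun i _ => Finset.sum_comm
    _ = ∑ n ∈ Finset.range N, ∑ i, ∑ j, c i * c j * (coef n * T i j ^ n) :=
        Finset.sum_comm
    _ = ∑ n ∈ Finset.range N, coef n * ∑ i, ∑ j, c i * c j * T i j ^ n := by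
        refine Finset.sum_congr rfl fun n _ => ?_
        rw [Finset.mul_sum]
        refine Finset.sum_congr rfl fun i _ => ?_
        rw [Finset.mul_sum]
        exact Finset.sum_congr rfl fun j _ => by ring

lemma sgaux_core (b : ℕ → ℝ) (hb : ∀ n, 0 ≤ b n) (hsum : Summable b) (N : ℕ) (ε : ℝ)
    (hε : ε * ε = 1)
    (hvan : ∀ n, N ≤ n → b n * (1 + ε * (-1) ^ n) = 0)
    (m : ℕ) (hm : ∑ n ∈ Finset.range N, 2 ^ n < m)
    (H : ∀ (d : ℕ) (z : Fin d → Fin 2 → ℝ),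
        (∀ i, ∑ l, z i l * z i l = 1) → Function.Injective z →
        ∀ c : Fin d → ℝ, c ≠ 0 →
          0 < ∑ i, ∑ j, c i * c j * ∑' n : ℕ, b n * (∑ l, z i l * z j l) ^ n) :
    False := by
  classical
  -- points on the circle
  set a : Fin m → ℝ := fun i => ((i : ℕ) + 1) / ((m : ℕ) + 1) with ha_def
  have ha_pos : ∀ i, 0 < a i := fun i => by
    apply div_pos <;> positivity
  have ha_lt : ∀ i, a i < 1 := fun i => by
    rw [ha_def, div_lt_one (by positivity)]
    have h2 : ((i : ℕ) : ℝ) < (m : ℝ) := by exact_mod_cast i.isLt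
    -- push_cast
    linarith
  have ha_inj : Function.Injective a := by
    intro i j hij
    rw [ha_def] at hij
    have hm0 : ((m : ℕ) : ℝ) + 1 ≠ 0 := by positivity
    rw [div_eq_div_iff hm0 hm0] at hij
    have : ((i : ℕ) : ℝ) = ((j : ℕ) : ℝ) := by
      have := mul_right_cancel₀ hm0 hij
      linarith
    exact Fin.ext (Nat.cast_injective this)
  set x : Fin m → Fin 2 → ℝ :=
    fun i l => if l = 0 then a i else Real.sqrt (1 - a i * a i) with hx_def
  have hx0 : ∀ i, x i 0 = a i := fun i => if_pos rfl
  have hsqnn : ∀ i, 0 ≤ 1 - a i * a i := fun i => by nlinarith [ha_pos i, ha_lt i]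
  have hxunit : ∀ i, ∑ l, x i l * x i l = 1 := by
    intro i
    rw [Fin.sum_univ_two]
    have h1 : x i 1 = Real.sqrt (1 - a i * a i) := if_neg (by norm_num)
    rw [hx0, h1, Real.mul_self_sqrt (hsqnn i)]
    ring
  -- the kernel vector
  obtain ⟨c, hc0, hker⟩ := sgaux_kernel N m hm x
  have hzero : ∀ n, n < N → ∑ i, ∑ j, c i * c j * (∑ l, x i l * x j l) ^ n = 0 := by
    intro n hn
    rw [sgaux_quad_eq x c n]
    exact Finset.sum_eq_zero fun k _ => by rw [hker n hn k]; norm_num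
  -- the configuration
  set z : Fin (m + m) → Fin 2 → ℝ :=
    Fin.addCases (fun i => x i) (fun i l => - x i l) with hz_def
  set c' : Fin (m + m) → ℝ := Fin.addCases (fun i => c i) (fun i => ε * c i) with hc'_def
  have hzc : ∀ i : Fin m, z (Fin.castAdd m i) = x i := fun i => by
    rw [hz_def]; exact Fin.addCases_left i
  have hzn : ∀ i : Fin m, z (Fin.natAdd m i) = fun l => - x i l := fun i => by
    rw [hz_def]; exact Fin.addCases_right i
  have hcc : ∀ i : Fin m, c' (Fin.castAdd m i) = c i := fun i => by
    rw [hc'_def]; exact Fin.addCases_left i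
  have hcn : ∀ i : Fin m, c' (Fin.natAdd m i) = ε * c i := fun i => by
    rw [hc'_def]; exact Fin.addCases_right i
  have hrep : ∀ p : Fin (m + m),
      (∃ i, p = Fin.castAdd m i) ∨ ∃ i, p = Fin.natAdd m i := fun p =>
    Fin.addCases (fun i => Or.inl ⟨i, rfl⟩) (fun i => Or.inr ⟨i, rfl⟩) p
  have hzunit : ∀ p, ∑ l, z p l * z p l = 1 := by
    intro p
    rcases hrep p with ⟨i, rfl⟩ | ⟨i, rfl⟩
    · rw [hzc]; exact hxunit i
    · rw [hzn]
      simp only [neg_mul_neg]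
      exact hxunit i
  have hzinj : Function.Injective z := by
    intro p q hpq
    have h0 := congrFun hpq 0
    rcases hrep p with ⟨i, rfl⟩ | ⟨i, rfl⟩ <;> rcases hrep q with ⟨j, rfl⟩ | ⟨j, rfl⟩
    · rw [hzc, hzc, hx0, hx0] at h0
      rw [ha_inj h0]
    · rw [hzc, hzn, hx0] at h0
      simp only [hx0] at h0
      exfalso; have := ha_pos i; have := ha_pos j; linarith
    · rw [hzn, hzc] at h0
      simp only [hx0] at h0
      exfalso; have := ha_pos i; have := ha_pos j; linarith
    · rw [hzn, hzn] at h0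
      simp only [hx0] at h0
      have : a i = a j := by linarith
      rw [ha_inj this]
  have hc'0 : c' ≠ 0 := by
    obtain ⟨i, hi⟩ := Function.ne_iff.mp hc0
    intro hcontra
    apply hi
    have := congrFun hcontra (Fin.castAdd m i)
    rwa [hcc] at this
  -- inner products
  have habs : ∀ i j : Fin m, |∑ l, x i l * x j l| ≤ 1 :=
    fun i j => sgaux_abs_le (x i) (x j) (hxunit i) (hxunit j)
  have hipnn : ∀ i j : Fin m, ∑ l, x i l * (- x j l) = -(∑ l, x i l * x j l) := by
    intro i j
    rw [← Finset.sum_neg_distrib]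
    exact Finset.sum_congr rfl fun l _ => by ring
  have hipnl : ∀ i j : Fin m, ∑ l, (- x i l) * x j l = -(∑ l, x i l * x j l) := by
    intro i j
    rw [← Finset.sum_neg_distrib]
    exact Finset.sum_congr rfl fun l _ => by ring
  have hipnln : ∀ i j : Fin m, ∑ l, (- x i l) * (- x j l) = ∑ l, x i l * x j l := by
    intro i j
    exact Finset.sum_congr rfl fun l _ => by ring
  -- the quadratic form vanishes
  have hQ := H (m + m) z hzunit hzinj c' hc'0
  have hS : ∑ i, ∑ j, c' i * c' j * ∑' n : ℕ, b n * (∑ l, z i l * z j l) ^ n = 0 := by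
    rw [Fin.sum_univ_add]
    have hinner : ∀ g : Fin (m + m) → ℝ,
        True := fun _ => trivial
    -- expand the inner sums
    simp_rw [Fin.sum_univ_add]
    simp only [hzc, hzn, hcc, hcn]
    simp only [hipnn, hipnl, hipnln]
    -- now combine
    rw [← Finset.sum_add_distrib]
    have hterm : ∀ i j : Fin m,
        (c i * c j * ∑' n : ℕ, b n * (∑ l, x i l * x j l) ^ n
          + c i * (ε * c j) * ∑' n : ℕ, b n * (-(∑ l, x i l * x j l)) ^ n)
        + (ε * c i * c j * ∑' n : ℕ, b n * (-(∑ l, x i l * x j l)) ^ n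
          + ε * c i * (ε * c j) * ∑' n : ℕ, b n * (∑ l, x i l * x j l) ^ n)
        = (2 * (c i * c j)) *
            ∑ n ∈ Finset.range N,
              (b n * (1 + ε * (-1) ^ n)) * (∑ l, x i l * x j l) ^ n := by
      intro i j
      rw [← sgaux_F b hb hsum N ε hvan _ (habs i j)]
      linear_combination
        (c i * c j * ∑' n : ℕ, b n * (∑ l, x i l * x j l) ^ n) * hε
    have key : ∑ i : Fin m, ∑ j : Fin m, (2 * (c i * c j)) *
        ∑ n ∈ Finset.range N,
          (b n * (1 + ε * (-1) ^ n)) * (∑ l, x i l * x j l) ^ n = 0 := by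
      have h2 : ∀ i j : Fin m, (2 * (c i * c j)) *
          ∑ n ∈ Finset.range N,
            (b n * (1 + ε * (-1) ^ n)) * (∑ l, x i l * x j l) ^ n
          = 2 * (c i * c j * ∑ n ∈ Finset.range N,
            (b n * (1 + ε * (-1) ^ n)) * (∑ l, x i l * x j l) ^ n) := by
        intro i j; ring
      simp_rw [h2, ← Finset.mul_sum]
      rw [sgaux_swap_fin c (fun i j => ∑ l, x i l * x j l) N
        (fun n => b n * (1 + ε * (-1) ^ n))]
      rw [Finset.sum_congr rfl fun n hn => by
        rw [hzero n (Finset.mem_range.mp hn), mul_zero]]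
      simp
    refine Eq.trans (Finset.sum_congr rfl fun i _ => ?_) key
    rw [← Finset.sum_add_distrib, ← Finset.sum_add_distrib, ← Finset.sum_add_distrib]
    exact Finset.sum_congr rfl fun j _ => hterm i j
  rw [hS] at hQ
  exact lt_irrefl 0 hQ

/-- **Theorem 3 (Schoenberg–Gneiting criterion for strict positive definiteness on spheres).**
Let `f : [−1,1] → ℝ` be given by `f(ρ) = ∑ₙ bₙ ρⁿ` with `bₙ ≥ 0` and `∑ₙ bₙ < ∞`.  Then the
kernel `K_f^{(n₀)}(x, x') = f(xᵀx')` on the unit sphere `S^{n₀−1}` is positive definite (i.e.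
`∑_{i,j} cᵢ c_j f(zᵢᵀ z_j) > 0` for all pairwise distinct `z₁, …, z_d` on the sphere and all
`c ≠ 0`) for every `n₀ ≥ 1` if and only if `bₙ > 0` for infinitely many even `n` and for
infinitely many odd `n`. -/
theorem schoenberg_gneiting_positive_definite_on_spheres
    (b : ℕ → ℝ) (hb : ∀ n, 0 ≤ b n) (hsum : Summable b) :
    (∀ n0 : ℕ, 1 ≤ n0 →
      ∀ (d : ℕ) (z : Fin d → Fin n0 → ℝ),
        (∀ i, ∑ l, z i l * z i l = 1) → Function.Injective z →
        ∀ c : Fin d → ℝ, c ≠ 0 →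
          0 < ∑ i, ∑ j, c i * c j * ∑' n : ℕ, b n * (∑ l, z i l * z j l) ^ n)
    ↔ ({n : ℕ | Even n ∧ 0 < b n}.Infinite ∧ {n : ℕ | Odd n ∧ 0 < b n}.Infinite) := by
  constructor
  · intro H
    have hbz : ∀ {n : ℕ}, ¬ (0 < b n) → b n = 0 := fun {n} h =>
      le_antisymm (not_lt.mp h) (hb n)
    constructor
    · by_contra hfin
      rw [Set.not_infinite] at hfin
      obtain ⟨B, hB⟩ := hfin.bddAbove
      refine sgaux_core b hb hsum (B + 1) 1 (by norm_num) ?_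
        ((∑ n ∈ Finset.range (B + 1), 2 ^ n) + 1) (Nat.lt_succ_self _)
        (H 2 (by norm_num))
      intro n hn
      rcases Nat.even_or_odd n with heven | hodd
      · have hnot : ¬ (0 < b n) := fun hpos =>
          absurd (hB ⟨heven, hpos⟩) (by omega)
        rw [hbz hnot, zero_mul]
      · rw [hodd.neg_one_pow]
        ring
    · by_contra hfin
      rw [Set.not_infinite] at hfin
      obtain ⟨B, hB⟩ := hfin.bddAbove
      refine sgaux_core b hb hsum (B + 1) (-1) (by norm_num) ?_
        ((∑ n ∈ Finset.range (B + 1), 2 ^ n) + 1) (Nat.lt_succ_self _)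
        (H 2 (by norm_num))
      intro n hn
      rcases Nat.even_or_odd n with heven | hodd
      · rw [heven.neg_one_pow]
        ring
      · have hnot : ¬ (0 < b n) := fun hpos =>
          absurd (hB ⟨hodd, hpos⟩) (by omega)
        rw [hbz hnot, zero_mul]
  · rintro ⟨he, ho⟩ n0 hn0 d z hz hinj c hc
    exact sgaux_bwd b hb hsum he ho z hz hinj c hc
end
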